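/- Fix d ≥ 1, h > 0 and α > 0, and define the complex-valued kernel U^{α,h}_j(t) = ∏_{i=1}^d (1/h) e^{−2(α+i)t/h²} ∑_{k ≥ max(j_i,0)} ((α+i)t/h²)^{2k−j_i} / ((k−j_i)! k!) for j ∈ ℤ^d and t ≥ 0 (i the imaginary unit). Then each defining series converges absolutely, U^{α,h}_j(0) = h^{−d} if j = 0 and 0 otherwise, and for every t > 0 and j ∈ ℤ^d, d/dt U^{α,h}_j(t) = (α+i)(Δ^h U^{α,h}(t))_j; i.e. U^{α,h} is the fundamental solution of the d-dimensional discrete damped Schrödinger equation ∂_t v = (α+i) Δ^h v. -/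

import Mathlib

noncomputable section

open Complex

/-- The `k`-th term of the series defining the one-dimensional discrete damped
Schrödinger kernel with damping `α`. -/
def Uterm (α h : ℝ) (j : ℤ) (t : ℝ) (k : ℕ) : ℂ :=
  if j ≤ (k : ℤ) then
    (((α : ℂ) + Complex.I) * (t : ℂ) / (h : ℂ) ^ 2) ^ (2 * (k : ℤ) - j).toNat /
      ((((k : ℤ) - j).toNat.factorial : ℂ) * (k.factorial : ℂ))
  else 0

lemma Uterm_norm_le (α h : ℝ) (j : ℤ) (t : ℝ) (k : ℕ) {M : ℝ} (hM1 : 1 ≤ M)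
    (hM : ‖((α : ℂ) + Complex.I) * (t : ℂ) / (h : ℂ) ^ 2‖ ≤ M) :
    ‖Uterm α h j t k‖ ≤ M ^ j.natAbs * ((M ^ 2) ^ k / k.factorial) := by
  have hM0 : (0:ℝ) ≤ M := zero_le_one.trans hM1
  rw [Uterm]
  split_ifs with hjk
  · rw [norm_div, norm_pow, norm_mul, Complex.norm_natCast, Complex.norm_natCast]
    set m := (2 * (k:ℤ) - j).toNat with hm
    set a := ((k:ℤ) - j).toNat with ha
    have hmle : m ≤ 2 * k + j.natAbs := by omega
    have h1 : ‖((α : ℂ) + Complex.I) * (t : ℂ) / (h : ℂ) ^ 2‖ ^ m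
        ≤ M ^ (2 * k + j.natAbs) :=
      (pow_le_pow_left₀ (norm_nonneg _) hM m).trans (pow_le_pow_right₀ hM1 hmle)
    have h2 : (k.factorial : ℝ) ≤ (a.factorial : ℝ) * k.factorial := by
      have h4 : (1:ℝ) ≤ (a.factorial : ℝ) := by exact_mod_cast a.factorial_pos
      have h5 : (0:ℝ) ≤ (k.factorial : ℝ) := by positivity
      nlinarith
    have h3 : (0:ℝ) < (k.factorial : ℝ) := Nat.cast_pos.mpr k.factorial_pos
    calc ‖((α : ℂ) + Complex.I) * (t : ℂ) / (h : ℂ) ^ 2‖ ^ m / ((a.factorial : ℝ) * k.factorial)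
        ≤ M ^ (2 * k + j.natAbs) / (k.factorial : ℝ) := div_le_div₀ (by positivity) h1 h3 h2
      _ = M ^ j.natAbs * ((M ^ 2) ^ k / k.factorial) := by rw [pow_add, pow_mul]; ring
  · simp only [norm_zero]; positivity

lemma Uterm_norm_summable (α h : ℝ) (j : ℤ) (t : ℝ) :
    Summable fun k : ℕ => ‖Uterm α h j t k‖ := by
  set M := max 1 ‖((α : ℂ) + Complex.I) * (t : ℂ) / (h : ℂ) ^ 2‖ with hMdef
  refine Summable.of_nonneg_of_le (fun k => norm_nonneg _)
    (fun k => Uterm_norm_le α h j t k (le_max_left _ _) (le_max_right _ _))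
    (((Real.summable_pow_div_factorial (M ^ 2))).mul_left _)

lemma Uterm_summable (α h : ℝ) (j : ℤ) (t : ℝ) :
    Summable fun k : ℕ => Uterm α h j t k :=
  (Uterm_norm_summable α h j t).of_norm


lemma Uterm_hasDerivAt (α h : ℝ) (j : ℤ) (k : ℕ) (t : ℝ) :
    HasDerivAt (fun s : ℝ => Uterm α h j s k)
      ((((α : ℂ) + Complex.I) / (h : ℂ) ^ 2) *
        (Uterm α h (j + 1) t k +
          if k = 0 then 0 else Uterm α h (j - 1) t (k - 1))) t := by
  by_cases hjk : j ≤ (k : ℤ)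
  · have hfun : (fun s : ℝ => Uterm α h j s k)
        = fun s : ℝ => (((α : ℂ) + Complex.I) * (s : ℂ) / (h : ℂ) ^ 2) ^ (2 * (k:ℤ) - j).toNat /
            ((((k:ℤ) - j).toNat.factorial : ℂ) * (k.factorial : ℂ)) := by
      funext s; rw [Uterm, if_pos hjk]
    rw [hfun]
    set m := (2 * (k:ℤ) - j).toNat with hm
    set a := ((k:ℤ) - j).toNat with ha
    set Z : ℂ := ((α : ℂ) + Complex.I) * (t : ℂ) / (h : ℂ) ^ 2 with hZ
    have hd : HasDerivAt
        (fun s : ℝ => (((α : ℂ) + Complex.I) * (s : ℂ) / (h : ℂ) ^ 2) ^ m /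
          ((a.factorial : ℂ) * (k.factorial : ℂ)))
        ((m : ℂ) * Z ^ (m - 1) * (((α : ℂ) + Complex.I) * 1 / (h : ℂ) ^ 2) /
          ((a.factorial : ℂ) * (k.factorial : ℂ))) t :=
      (((((hasDerivAt_id ((t : ℝ) : ℂ)).const_mul ((α : ℂ) + Complex.I)).div_const
        ((h : ℂ) ^ 2)).pow m).div_const _).comp_ofReal
    clear_value Z
    convert hd using 1
    have claim1 : Uterm α h (j + 1) t k
        = (a : ℂ) * Z ^ (m - 1) / ((a.factorial : ℂ) * (k.factorial : ℂ)) := by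
      by_cases h' : j + 1 ≤ (k : ℤ)
      · have e1 : (2 * (k:ℤ) - (j + 1)).toNat = m - 1 := by omega
        have e2 : ((k:ℤ) - (j + 1)).toNat = a - 1 := by omega
        have e3 : ((a.factorial : ℂ)) = (a : ℂ) * ((a - 1).factorial : ℂ) := by
          exact_mod_cast (Nat.mul_factorial_pred (by omega : a ≠ 0)).symm
        have haC : (a : ℂ) ≠ 0 := Nat.cast_ne_zero.mpr (by omega)
        rw [Uterm, if_pos h', e1, e2, ← hZ, e3, mul_assoc,
          mul_div_mul_left _ _ haC]
      · have ha0 : a = 0 := by omega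
        rw [Uterm, if_neg h', ha0]
        simp
    have claim2 : (if k = 0 then 0 else Uterm α h (j - 1) t (k - 1))
        = (k : ℂ) * Z ^ (m - 1) / ((a.factorial : ℂ) * (k.factorial : ℂ)) := by
      by_cases hk : k = 0
      · rw [if_pos hk, hk]; simp
      · rw [if_neg hk, Uterm, if_pos (by omega : j - 1 ≤ ((k - 1 : ℕ) : ℤ))]
        have e1 : (2 * ((k - 1 : ℕ) : ℤ) - (j - 1)).toNat = m - 1 := by omega
        have e2 : (((k - 1 : ℕ) : ℤ) - (j - 1)).toNat = a := by omega
        have e3 : ((k.factorial : ℂ)) = (k : ℂ) * ((k - 1).factorial : ℂ) := by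
          exact_mod_cast (Nat.mul_factorial_pred (by omega : k ≠ 0)).symm
        have hkC : (k : ℂ) ≠ 0 := Nat.cast_ne_zero.mpr hk
        rw [e1, e2, ← hZ, e3, mul_left_comm, mul_div_mul_left _ _ hkC]
    rw [claim1, claim2]
    have hmak : (m : ℂ) = (a : ℂ) + (k : ℂ) := by
      have hmk : m = a + k := by omega
      exact_mod_cast hmk
    rw [hmak]
    ring
  · have hfun : (fun s : ℝ => Uterm α h j s k) = fun _ : ℝ => (0 : ℂ) := by
      funext s; rw [Uterm, if_neg hjk]
    have h1 : Uterm α h (j + 1) t k = 0 := by rw [Uterm, if_neg (by omega)]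
    have h2 : (if k = 0 then 0 else Uterm α h (j - 1) t (k - 1)) = (0 : ℂ) := by
      by_cases hk : k = 0
      · rw [if_pos hk]
      · rw [if_neg hk, Uterm, if_neg (by omega)]
    rw [hfun, h1, h2]
    simpa using hasDerivAt_const t (0 : ℂ)


lemma Usum_hasDerivAt (α h : ℝ) (j : ℤ) (t : ℝ) :
    HasDerivAt (fun s : ℝ => ∑' k : ℕ, Uterm α h j s k)
      ((((α : ℂ) + Complex.I) / (h : ℂ) ^ 2) *
        ((∑' k : ℕ, Uterm α h (j + 1) t k) + ∑' k : ℕ, Uterm α h (j - 1) t k)) t := by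
  set W : ℂ := ((α : ℂ) + Complex.I) / (h : ℂ) ^ 2 with hW
  set M : ℝ := max 1 (‖W‖ * (|t| + 1)) with hM
  have hM1 : (1 : ℝ) ≤ M := le_max_left _ _
  set u : ℕ → ℝ := fun k => ‖W‖ * (M ^ (j + 1).natAbs * ((M ^ 2) ^ k / k.factorial) +
      if k = 0 then 0 else M ^ (j - 1).natAbs * ((M ^ 2) ^ (k - 1) / (k - 1).factorial))
    with hu
  have hZle : ∀ y : ℝ, y ∈ Metric.ball (0 : ℝ) (|t| + 1) →
      ‖((α : ℂ) + Complex.I) * (y : ℂ) / (h : ℂ) ^ 2‖ ≤ M := by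
    intro y hy
    have hyb : |y| ≤ |t| + 1 := by
      have := Metric.mem_ball.mp hy
      rw [Real.dist_eq, sub_zero] at this
      exact this.le
    have e : ((α : ℂ) + Complex.I) * (y : ℂ) / (h : ℂ) ^ 2 = W * (y : ℂ) := by
      rw [hW]; ring
    rw [e, norm_mul, Complex.norm_real, Real.norm_eq_abs]
    calc ‖W‖ * |y| ≤ ‖W‖ * (|t| + 1) :=
          mul_le_mul_of_nonneg_left hyb (norm_nonneg _)
      _ ≤ M := le_max_right _ _
  have s1 : Summable fun k : ℕ => M ^ (j + 1).natAbs * ((M ^ 2) ^ k / k.factorial) :=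
    (Real.summable_pow_div_factorial (M ^ 2)).mul_left _
  have s2 : Summable fun k : ℕ =>
      if k = 0 then (0:ℝ) else M ^ (j - 1).natAbs * ((M ^ 2) ^ (k - 1) / (k - 1).factorial) := by
    apply (summable_nat_add_iff 1).mp
    simpa using (Real.summable_pow_div_factorial (M ^ 2)).mul_left (M ^ (j - 1).natAbs)
  have husum : Summable u := ((s1.add s2).mul_left _)
  have hbound : ∀ (k : ℕ) (y : ℝ), y ∈ Metric.ball (0 : ℝ) (|t| + 1) →
      ‖W * (Uterm α h (j + 1) y k +
        if k = 0 then 0 else Uterm α h (j - 1) y (k - 1))‖ ≤ u k := by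
    intro k y hy
    rw [norm_mul, hu]
    refine mul_le_mul_of_nonneg_left ((norm_add_le _ _).trans (add_le_add ?_ ?_)) (norm_nonneg _)
    · exact Uterm_norm_le α h (j + 1) y k hM1 (hZle y hy)
    · by_cases hk : k = 0
      · simp [hk]
      · rw [if_neg hk, if_neg hk]
        exact Uterm_norm_le α h (j - 1) y (k - 1) hM1 (hZle y hy)
  have hmem : t ∈ Metric.ball (0 : ℝ) (|t| + 1) := by
    rw [Metric.mem_ball, Real.dist_eq, sub_zero]
    exact lt_add_one _
  have H := hasDerivAt_tsum_of_isPreconnected husum Metric.isOpen_ball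
    ((convex_ball (0 : ℝ) (|t| + 1)).isPreconnected)
    (fun k y _ => Uterm_hasDerivAt α h j k y)
    hbound hmem (Uterm_summable α h j t) hmem
  refine H.congr_deriv (Eq.symm ?_)
  have sum1 : Summable fun k : ℕ => Uterm α h (j + 1) t k := Uterm_summable α h (j + 1) t
  have sum2 : Summable fun k : ℕ =>
      if k = 0 then (0 : ℂ) else Uterm α h (j - 1) t (k - 1) := by
    apply (summable_nat_add_iff 1).mp
    simpa using Uterm_summable α h (j - 1) t
  rw [tsum_mul_left, Summable.tsum_add sum1 sum2]
  congr 2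
  rw [Summable.tsum_eq_zero_add sum2]
  simp


/-- The one-dimensional discrete damped Schrödinger kernel. -/
def Uker1 (α h : ℝ) (j : ℤ) (t : ℝ) : ℂ :=
  (1 / (h : ℂ)) * Complex.exp (-2 * ((α : ℂ) + Complex.I) * (t : ℂ) / (h : ℂ) ^ 2) *
    ∑' k : ℕ, Uterm α h j t k


lemma Uker1_hasDerivAt (α h : ℝ) (j : ℤ) (t : ℝ) :
    HasDerivAt (fun s : ℝ => Uker1 α h j s)
      ((((α : ℂ) + Complex.I) / (h : ℂ) ^ 2) *
        (Uker1 α h (j + 1) t - 2 * Uker1 α h j t + Uker1 α h (j - 1) t)) t := by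
  have hexp : HasDerivAt
      (fun s : ℝ => Complex.exp (-2 * ((α : ℂ) + Complex.I) * (s : ℂ) / (h : ℂ) ^ 2))
      (Complex.exp (-2 * ((α : ℂ) + Complex.I) * (t : ℂ) / (h : ℂ) ^ 2) *
        (-2 * ((α : ℂ) + Complex.I) * 1 / (h : ℂ) ^ 2)) t :=
    ((((hasDerivAt_id ((t : ℝ) : ℂ)).const_mul (-2 * ((α : ℂ) + Complex.I))).div_const
      ((h : ℂ) ^ 2)).cexp).comp_ofReal
  have hS := Usum_hasDerivAt α h j t
  have hmul := (hexp.const_mul ((1 : ℂ) / (h : ℂ))).mul hS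
  simp only [Uker1]
  refine hmul.congr_deriv (Eq.symm ?_)
  ring

lemma Uker1_zero (α h : ℝ) (j : ℤ) :
    Uker1 α h j 0 = if j = 0 then 1 / (h : ℂ) else 0 := by
  have hterm : (fun k : ℕ => Uterm α h j 0 k)
      = fun k : ℕ => if k = 0 then (if j = 0 then (1 : ℂ) else 0) else 0 := by
    funext k
    by_cases hj : j = 0 ∧ k = 0
    · obtain ⟨rfl, rfl⟩ := hj
      simp [Uterm]
    · have hrhs : (if k = 0 then (if j = 0 then (1 : ℂ) else 0) else 0) = 0 := by
        by_cases hk : k = 0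
        · rw [if_pos hk, if_neg (fun hj0 => hj ⟨hj0, hk⟩)]
        · rw [if_neg hk]
      rw [hrhs, Uterm]
      split_ifs with hjk
      · have hm : (2 * (k : ℤ) - j).toNat ≠ 0 := by omega
        rw [Complex.ofReal_zero, mul_zero, zero_div, zero_pow hm, zero_div]
      · rfl
  rw [Uker1, hterm, tsum_ite_eq (0 : ℕ) (fun _ => if j = 0 then (1 : ℂ) else 0)]
  rw [Complex.ofReal_zero, mul_zero, zero_div, Complex.exp_zero, mul_one]
  split_ifs with hj <;> simp


/-- The `d`-dimensional discrete damped Schrödinger kernel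
`U^{α,h}_j(t) = ∏_{i=1}^d U^{α,h}_{j_i}(t)`. -/
def Uker (α h : ℝ) {d : ℕ} (j : Fin d → ℤ) (t : ℝ) : ℂ :=
  ∏ i : Fin d, Uker1 α h (j i) t

/-- Unit lattice vector in direction `i`. -/
def gunit {d : ℕ} (i : Fin d) : Fin d → ℤ := fun k => if k = i then 1 else 0


lemma Uker_update (α h : ℝ) {d : ℕ} (j : Fin d → ℤ) (i : Fin d) (v : ℤ) (t : ℝ) :
    Uker α h (Function.update j i v) t
      = Uker1 α h v t * ∏ l ∈ Finset.univ.erase i, Uker1 α h (j l) t := by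
  rw [Uker]
  have e : (fun l => Uker1 α h (Function.update j i v l) t)
      = Function.update (fun l => Uker1 α h (j l) t) i (Uker1 α h v t) := by
    funext l
    by_cases hl : l = i
    · subst hl; simp [Function.update]
    · simp [Function.update, hl]
  calc (∏ l : Fin d, Uker1 α h (Function.update j i v l) t)
      = ∏ l : Fin d, Function.update (fun l => Uker1 α h (j l) t) i (Uker1 α h v t) l := by
        rw [e]
    _ = Uker1 α h v t * ∏ l ∈ Finset.univ.erase i, Uker1 α h (j l) t := by
        rw [Finset.prod_update_of_mem (Finset.mem_univ i), Finset.sdiff_singleton_eq_erase]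

lemma add_gunit {d : ℕ} (j : Fin d → ℤ) (i : Fin d) :
    j + gunit i = Function.update j i (j i + 1) := by
  funext l
  by_cases hl : l = i
  · subst hl; simp [gunit, Function.update]
  · simp [gunit, Function.update, hl]

lemma sub_gunit {d : ℕ} (j : Fin d → ℤ) (i : Fin d) :
    j - gunit i = Function.update j i (j i - 1) := by
  funext l
  by_cases hl : l = i
  · subst hl; simp [gunit, Function.update]
  · simp [gunit, Function.update, hl]


/-- `U^{α,h}` is the fundamental solution of the `d`-dimensional
discrete damped Schrödinger equation `∂_t v = (α+i) Δ^h v`: the defining series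
converge absolutely, the initial value is `h^{−d}δ`, and for `t > 0`,
`d/dt U^{α,h}_j(t) = (α+i)(Δ^h U^{α,h}(t))_j`. -/
theorem discrete_damped_schrodinger_kernel_fundamental
    (d : ℕ) (hd : 1 ≤ d) (h α : ℝ) (hh : 0 < h) (hα : 0 < α) :
    (∀ (j : ℤ) (t : ℝ), 0 ≤ t → Summable fun k : ℕ => ‖Uterm α h j t k‖) ∧
    (∀ j : Fin d → ℤ, Uker α h j 0 = if j = 0 then (1 : ℂ) / (h : ℂ) ^ d else 0) ∧
    (∀ (j : Fin d → ℤ) (t : ℝ), 0 < t →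
      HasDerivAt (fun s => Uker α h j s)
        (((α : ℂ) + Complex.I) *
          ∑ i : Fin d,
            (Uker α h (j + gunit i) t - 2 * Uker α h j t + Uker α h (j - gunit i) t) /
              (h : ℂ) ^ 2)
        t) := by
  refine ⟨fun j t _ => Uterm_norm_summable α h j t, ?_, ?_⟩
  · intro j
    by_cases hj : j = 0
    · subst hj
      rw [if_pos rfl, Uker]
      simp only [Pi.zero_apply, Uker1_zero, if_pos rfl, if_true]
      rw [Finset.prod_const, Finset.card_univ, Fintype.card_fin, div_pow, one_pow]
    · rw [if_neg hj, Uker]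
      obtain ⟨i, hi⟩ := Function.ne_iff.mp hj
      exact Finset.prod_eq_zero (Finset.mem_univ i) (by rw [Uker1_zero, if_neg (by simpa using hi)])
  · intro j t _
    have hprod := HasDerivAt.fun_finset_prod
      (u := Finset.univ) (f := fun i (s : ℝ) => Uker1 α h (j i) s)
      (f' := fun i => (((α : ℂ) + Complex.I) / (h : ℂ) ^ 2) *
        (Uker1 α h (j i + 1) t - 2 * Uker1 α h (j i) t + Uker1 α h (j i - 1) t))
      (x := t) (fun i _ => Uker1_hasDerivAt α h (j i) t)
    have hfun : (fun s : ℝ => Uker α h j s)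
        = (fun s : ℝ => ∏ i : Fin d, Uker1 α h (j i) s) := by
      funext s; rw [Uker]
    rw [hfun]
    refine hprod.congr_deriv (Eq.symm ?_)
    rw [Finset.mul_sum]
    refine Finset.sum_congr rfl fun i _ => ?_
    have e1 : Uker α h (j + gunit i) t
        = Uker1 α h (j i + 1) t * ∏ l ∈ Finset.univ.erase i, Uker1 α h (j l) t := by
      rw [add_gunit, Uker_update]
    have e2 : Uker α h (j - gunit i) t
        = Uker1 α h (j i - 1) t * ∏ l ∈ Finset.univ.erase i, Uker1 α h (j l) t := by
      rw [sub_gunit, Uker_update]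
    have e3 : Uker α h j t
        = Uker1 α h (j i) t * ∏ l ∈ Finset.univ.erase i, Uker1 α h (j l) t := by
      rw [Uker, ← Finset.mul_prod_erase Finset.univ _ (Finset.mem_univ i)]
    rw [e1, e2, e3, smul_eq_mul]
    ring
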